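/- Let R be a Noetherian ring, P a prime ideal, and M a finitely generated R-module killed by a power of P. Then there exists g ∈ R ∖ P such that the localization M_g is free filterable relative to P·R_g over R_g. -/

import Mathlib

/-!
STATEMENT 2.  `R` Noetherian, `P` prime, `M` a finitely generated `R`-module
killed by a power of `P`.  Then there is `g ∉ P` such that `M_g` is free
filterable relative to `P·R_g` over `R_g`.
-/

set_option maxHeartbeats 1600000

universe u v

/-- `M` is free filterable relative to the ideal `P`: an ascending chain of
finitely generated submodules starting at `0` with union `M` whose successive
factors are free `R⧸P`-modules. -/
def FreeFilterable (R : Type u) [CommRing R] (P : Ideal R)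
    (M : Type v) [AddCommGroup M] [Module R M] : Prop :=
  ∃ F : ℕ → Submodule R M,
    F 0 = ⊥ ∧
    (∀ n, F n ≤ F (n + 1)) ∧
    (∀ n, (F n).FG) ∧
    (⨆ n, F n) = ⊤ ∧
    ∀ n, ∃ ι : Type v,
      Nonempty ((↥(F (n + 1)) ⧸ Submodule.comap (F (n + 1)).subtype (F n))
        ≃ₗ[R] (ι →₀ R ⧸ P))

open IsLocalizedModule

namespace GenFreeAux

/-- A linear equivalence between two subsingleton modules. -/
def subsingletonEquiv (R : Type*) [Semiring R] (X Y : Type*)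
    [AddCommMonoid X] [Module R X] [AddCommMonoid Y] [Module R Y]
    [Subsingleton X] [Subsingleton Y] : X ≃ₗ[R] Y where
  toFun _ := 0
  invFun _ := 0
  left_inv _ := Subsingleton.elim _ _
  right_inv _ := Subsingleton.elim _ _
  map_add' _ _ := (add_zero 0).symm
  map_smul' r _ := by simp

/-- Upgrade an `R`-linear equivalence between modules over a localization to a
linear equivalence over the localization. -/
noncomputable def extEquiv {R : Type*} [CommSemiring R] (S : Submonoid R) (A : Type*)
    [CommSemiring A] [Algebra R A] [IsLocalization S A]
    {X Y : Type*} [AddCommMonoid X] [Module R X] [Module A X] [IsScalarTower R A X]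
    [AddCommMonoid Y] [Module R Y] [Module A Y] [IsScalarTower R A Y]
    (e : X ≃ₗ[R] Y) : X ≃ₗ[A] Y :=
  { e.toLinearMap.extendScalarsOfIsLocalization S A with
    invFun := e.symm
    left_inv := e.left_inv
    right_inv := e.right_inv }

lemma isScalarTower_quotient {S R M : Type*} [Ring R] [Semiring S] [AddCommGroup M]
    [Module R M] [SMul S R] [Module S M] [IsScalarTower S R M] (P : Submodule R M) :
    IsScalarTower S R (M ⧸ P) := by
  constructor
  intro s r x
  obtain ⟨y, rfl⟩ := Submodule.Quotient.mk_surjective P x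
  rw [← Submodule.Quotient.mk_smul, ← Submodule.Quotient.mk_smul, ← Submodule.Quotient.mk_smul,
    smul_assoc]

section SpanTorsion

variable {A : Type*} [CommRing A] [IsDomain A] {W : Type*} [AddCommGroup W] [Module A W]

/-- Generic freeness, first step: a finitely generated module over a domain has a
finite linearly independent family `w` and a nonzero scalar `c` such that `c` times
anything lies in the span of `w`. -/
lemma spanTorsion (s : Finset W) (hs : Submodule.span A (s : Set W) = ⊤) :
    ∃ (n : ℕ) (w : Fin n → W) (c : A), c ≠ 0 ∧ LinearIndependent A w ∧
      ∀ v : W, c • v ∈ Submodule.span A (Set.range w) := by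
  classical
  set sv : Fin s.card → W := fun i => (s.equivFin.symm i : W) with hsv
  have hrangesv : Set.range sv = (s : Set W) := by
    ext x
    constructor
    · rintro ⟨i, rfl⟩
      exact (s.equivFin.symm i).2
    · intro hx
      exact ⟨s.equivFin ⟨x, hx⟩, by simp [hsv]⟩
  obtain ⟨I, hind, hmax⟩ := exists_maximal_linearIndepOn A sv
  haveI : Fintype ↥I := Fintype.ofFinite ↥I
  set e := Fintype.equivFin ↥I with he
  set w : Fin (Fintype.card ↥I) → W := fun j => sv (e.symm j) with hw
  have hwind : LinearIndependent A w := LinearIndependent.comp hind e.symm e.symm.injective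
  have hrange : Set.range w = sv '' I := by
    ext x
    constructor
    · rintro ⟨j, rfl⟩
      exact ⟨(e.symm j : ↥I), (e.symm j).2, rfl⟩
    · rintro ⟨i, hi, rfl⟩
      exact ⟨e ⟨i, hi⟩, by simp [hw]⟩
  have hci : ∀ i : Fin s.card, ∃ a : A, a ≠ 0 ∧ a • sv i ∈ Submodule.span A (sv '' I) := by
    intro i
    by_cases h : i ∈ I
    · exact ⟨1, one_ne_zero, by
        rw [one_smul]; exact Submodule.subset_span ⟨i, h, rfl⟩⟩
    · exact hmax i h
  choose cc hcc0 hccm using hci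
  refine ⟨_, w, ∏ i, cc i, Finset.prod_ne_zero_iff.mpr fun i _ => hcc0 i, hwind, ?_⟩
  have hgen : ∀ i, (∏ i, cc i) • sv i ∈ Submodule.span A (Set.range w) := by
    intro i
    rw [hrange, ← Finset.prod_erase_mul Finset.univ cc (Finset.mem_univ i), mul_smul]
    exact Submodule.smul_mem _ _ (hccm i)
  intro v
  have hv : v ∈ Submodule.span A (Set.range sv) := by
    rw [hrangesv, hs]; trivial
  induction hv using Submodule.span_induction with
  | mem x hx => obtain ⟨i, rfl⟩ := hx; exact hgen i
  | zero => rw [smul_zero]; exact Submodule.zero_mem _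
  | add x y _ _ hx hy => rw [smul_add]; exact Submodule.add_mem _ hx hy
  | smul a x _ hx => rw [smul_comm]; exact Submodule.smul_mem _ _ hx

end SpanTorsion

section Qmap

variable {R : Type u} [CommRing R] (P : Ideal R) (g : R)

/-- The canonical `R`-linear map `R⧸P → R_g⧸P·R_g`. -/
noncomputable def qmap :
    (R ⧸ P) →ₗ[R] (Localization.Away g ⧸ P.map (algebraMap R (Localization.Away g))) :=
  Submodule.liftQ P (Algebra.linearMap R _) (by
    intro a ha
    have : algebraMap R (Localization.Away g ⧸ P.map (algebraMap R (Localization.Away g))) a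
        = Ideal.Quotient.mk _ (algebraMap R (Localization.Away g) a) := by
      rw [IsScalarTower.algebraMap_apply R (Localization.Away g), Ideal.Quotient.algebraMap_eq]
    simp only [LinearMap.mem_ker, Algebra.linearMap_apply, this,
      Ideal.Quotient.eq_zero_iff_mem]
    exact Ideal.mem_map_of_mem _ ha)

lemma qmap_mk (x : R) :
    qmap P g (Submodule.Quotient.mk x)
      = Ideal.Quotient.mk (P.map (algebraMap R (Localization.Away g)))
          (algebraMap R (Localization.Away g) x) := by
  rw [qmap, Submodule.liftQ_apply, Algebra.linearMap_apply,
    IsScalarTower.algebraMap_apply R (Localization.Away g), Ideal.Quotient.algebraMap_eq]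

lemma disjoint_powers (hP : P.IsPrime) (hg : g ∉ P) :
    Disjoint ((Submonoid.powers g : Submonoid R) : Set R) (P : Set R) := by
  rw [Set.disjoint_left]
  rintro x ⟨n, rfl⟩ hxP
  exact hg (hP.mem_of_pow_mem n hxP)

lemma isLocalizedModule_qmap (hP : P.IsPrime) (hg : g ∉ P) :
    IsLocalizedModule (Submonoid.powers g) (qmap P g) := by
  set R' := Localization.Away g
  set P' := P.map (algebraMap R R')
  constructor
  · intro s
    rw [Module.End.isUnit_iff]
    have hu : IsUnit (algebraMap R R' (s : R)) := IsLocalization.map_units R' s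
    set u := hu.unit with hu'
    have hsmul : ∀ x : R' ⧸ P',
        (algebraMap R (Module.End R (R' ⧸ P')) (s : R)) x = (u : R') • x := by
      intro x
      rw [Module.algebraMap_end_apply, ← algebraMap_smul R' (s : R) x, IsUnit.unit_spec]
    constructor
    · intro x y hxy
      rw [hsmul, hsmul] at hxy
      have := congrArg (fun z => ((u⁻¹ : R'ˣ) : R') • z) hxy
      simpa [smul_smul] using this
    · intro x
      refine ⟨((u⁻¹ : R'ˣ) : R') • x, ?_⟩
      rw [hsmul, smul_smul]
      simp
  · intro y
    obtain ⟨z, rfl⟩ := Ideal.Quotient.mk_surjective y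
    obtain ⟨⟨x, t⟩, hxt⟩ := IsLocalization.surj (Submonoid.powers g) (S := R') z
    dsimp only at hxt
    refine ⟨⟨Submodule.Quotient.mk x, t⟩, ?_⟩
    have key : (t : R) • (Ideal.Quotient.mk P' z)
        = Ideal.Quotient.mk P' (algebraMap R R' (t : R) * z) := by
      rw [← Ideal.Quotient.mk_eq_mk, ← Ideal.Quotient.mk_eq_mk, ← Submodule.Quotient.mk_smul,
        Algebra.smul_def]
    show t • (Ideal.Quotient.mk P' z) = qmap P g (Submodule.Quotient.mk x)
    rw [qmap_mk, Submonoid.smul_def, key, mul_comm ((algebraMap R R') (t : R)) z, hxt]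
  · intro x x' h
    obtain ⟨a, rfl⟩ := Submodule.Quotient.mk_surjective P x
    obtain ⟨a', rfl⟩ := Submodule.Quotient.mk_surjective P x'
    rw [qmap_mk, qmap_mk, Ideal.Quotient.mk_eq_mk_iff_sub_mem, ← map_sub] at h
    have hsub : a - a' ∈ P := by
      have := IsLocalization.under_map_of_isPrime_disjoint (Submonoid.powers g) R' (I := P) hP
        (disjoint_powers P g hP hg)
      rw [← this]
      exact h
    exact ⟨1, by rw [one_smul, one_smul, Submodule.Quotient.eq P |>.mpr hsub]⟩

end Qmap

section LocalizedSub

variable {R : Type*} (S : Type*) {M N : Type*} [CommRing R] [CommRing S]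
  [AddCommGroup M] [AddCommGroup N] [Module R M] [Module R N] [Algebra R S]
  [Module S N] [IsScalarTower R S N]
  (p : Submonoid R) [IsLocalization p S] (f : M →ₗ[R] N) [IsLocalizedModule p f]

lemma localized'_mono {N₁ N₂ : Submodule R M} (h : N₁ ≤ N₂) :
    N₁.localized' S p f ≤ N₂.localized' S p f := by
  intro x hx
  rw [Submodule.mem_localized'] at hx ⊢
  obtain ⟨m, hm, s, hs⟩ := hx
  exact ⟨m, h hm, s, hs⟩

lemma coe_mk'_toLocalized' (N₁ : Submodule R M) (m : ↥N₁) (s : p) :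
    ((IsLocalizedModule.mk' (N₁.toLocalized' S p f) m s : ↥(N₁.localized' S p f)) : N)
      = IsLocalizedModule.mk' f (m : M) s := by
  have hl : s • ((IsLocalizedModule.mk' (N₁.toLocalized' S p f) m s :
      ↥(N₁.localized' S p f)) : N) = f (m : M) := by
    have h2 : s • (IsLocalizedModule.mk' (N₁.toLocalized' S p f) m s)
        = (N₁.toLocalized' S p f) m := IsLocalizedModule.mk'_cancel' _ m s
    calc s • ((IsLocalizedModule.mk' (N₁.toLocalized' S p f) m s :
          ↥(N₁.localized' S p f)) : N)
        = ((s • IsLocalizedModule.mk' (N₁.toLocalized' S p f) m s :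
          ↥(N₁.localized' S p f)) : N) := rfl
      _ = (((N₁.toLocalized' S p f) m : ↥(N₁.localized' S p f)) : N) := by rw [h2]
      _ = f (m : M) := rfl
  have hr : s • (IsLocalizedModule.mk' f (m : M) s) = f (m : M) :=
    IsLocalizedModule.mk'_cancel' f _ s
  rw [← IsLocalizedModule.smul_inj f s, hl, hr]

lemma localized'_comap (N₁ N₂ : Submodule R M) (h : N₂ ≤ N₁) :
    (Submodule.comap N₁.subtype N₂).localized' S p (N₁.toLocalized' S p f) =
      Submodule.comap (N₁.localized' S p f).subtype (N₂.localized' S p f) := by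
  ext x
  rw [Submodule.mem_localized', Submodule.mem_comap, Submodule.mem_localized']
  constructor
  · rintro ⟨m, hm, s, rfl⟩
    exact ⟨(m : M), hm, s, (coe_mk'_toLocalized' S p f N₁ m s).symm⟩
  · rintro ⟨m, hm, s, hs⟩
    refine ⟨⟨m, h hm⟩, hm, s, ?_⟩
    apply Subtype.ext
    rw [coe_mk'_toLocalized' S p f N₁ ⟨m, h hm⟩ s]
    exact hs

end LocalizedSub

section GFR

variable {R : Type u} [CommRing R]

/-- Generic freeness for a finite family of finitely generated modules killed by a
prime `P`: there is a common `g ∉ P` such that each localization at `g` is finite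
free over `R_g ⧸ P·R_g`. -/
lemma gfr (P : Ideal R) (hP : P.IsPrime) (k : ℕ)
    (W : ℕ → Type u) [∀ j, AddCommGroup (W j)] [∀ j, Module R (W j)]
    (hfin : ∀ j, Module.Finite R (W j))
    (hkill : ∀ j, ∀ a ∈ P, ∀ x : W j, a • x = 0) :
    ∃ g : R, g ∉ P ∧ ∀ j < k, ∀ (W' : Type u) [AddCommGroup W'] [Module R W']
      (f : W j →ₗ[R] W') (_ : IsLocalizedModule (Submonoid.powers g) f),
      ∃ n : ℕ, Nonempty (W' ≃ₗ[R] (Fin n →₀ (Localization.Away g ⧸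
        P.map (algebraMap R (Localization.Away g))))) := by
  classical
  haveI := hP
  haveI : IsDomain (R ⧸ P) := Ideal.Quotient.isDomain P
  have hTor : ∀ j, Module.IsTorsionBySet R (W j) P := by
    intro j x a
    exact hkill j (a : R) a.2 x
  letI modA : ∀ j, Module (R ⧸ P) (W j) := fun j => (hTor j).module
  haveI towA : ∀ j, IsScalarTower R (R ⧸ P) (W j) := fun j => (hTor j).isScalarTower
  have hst : ∀ j, ∃ (n : ℕ) (w : Fin n → W j) (c : R ⧸ P), c ≠ 0 ∧
      LinearIndependent (R ⧸ P) w ∧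
      ∀ v : W j, c • v ∈ Submodule.span (R ⧸ P) (Set.range w) := by
    intro j
    haveI := hfin j
    obtain ⟨s, hsR⟩ := Module.Finite.fg_top (R := R) (M := W j)
    apply spanTorsion s
    rw [eq_top_iff]
    intro x _
    have hx : x ∈ Submodule.span R (s : Set (W j)) := by rw [hsR]; trivial
    exact Submodule.span_le_restrictScalars R (R ⧸ P) _ hx
  choose nn ww cc hc0 hind hcs using hst
  set c : R ⧸ P := ∏ j ∈ Finset.range k, cc j with hc
  have hcne : c ≠ 0 := Finset.prod_ne_zero_iff.mpr fun j _ => hc0 j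
  obtain ⟨g, hgc⟩ := Ideal.Quotient.mk_surjective c
  have hg : g ∉ P := by
    intro hgP
    exact hcne (by rw [← hgc, Ideal.Quotient.eq_zero_iff_mem]; exact hgP)
  refine ⟨g, hg, ?_⟩
  intro j hj W' _ _ f hf
  haveI := hf
  set R' := Localization.Away g with hR'
  set P' := P.map (algebraMap R R') with hP'
  set B := R' ⧸ P' with hB
  -- the span-torsion property for `c`
  have hcs' : ∀ v : W j, c • v ∈ Submodule.span (R ⧸ P) (Set.range (ww j)) := by
    intro v
    rw [hc, ← Finset.prod_erase_mul (Finset.range k) cc (Finset.mem_range.mpr hj), mul_smul]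
    exact Submodule.smul_mem _ _ (hcs j v)
  -- the localized base ring map
  haveI hq : IsLocalizedModule (Submonoid.powers g) (qmap P g) :=
    isLocalizedModule_qmap P g hP hg
  set ℓ : (Fin (nn j) →₀ (R ⧸ P)) →ₗ[R] (Fin (nn j) →₀ B) :=
    Finsupp.mapRange.linearMap (qmap P g) with hℓ
  haveI hℓloc : IsLocalizedModule (Submonoid.powers g) ℓ := inferInstance
  set φ : (Fin (nn j) →₀ (R ⧸ P)) →ₗ[R] W j :=
    (Finsupp.linearCombination (R ⧸ P) (ww j)).restrictScalars R with hφ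
  have hφinj : Function.Injective φ := (hind j)
  set Φ : (Fin (nn j) →₀ B) →ₗ[R] W' := IsLocalizedModule.map (Submonoid.powers g) ℓ f φ with hΦ
  have hginj : Function.Injective Φ := by
    rw [← LinearMap.ker_eq_bot]
    rw [eq_bot_iff]
    intro x' hx'
    obtain ⟨⟨x, s⟩, rfl⟩ := IsLocalizedModule.mk'_surjective (Submonoid.powers g) ℓ x'
    rw [LinearMap.mem_ker] at hx'
    have hx0 : IsLocalizedModule.mk' f (φ x) s = 0 := by
      rw [← IsLocalizedModule.map_mk' (Submonoid.powers g) ℓ f φ x s]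
      exact hx'
    obtain ⟨t, ht⟩ := (IsLocalizedModule.mk'_eq_zero' f s).mp hx0
    have : φ (t • x) = 0 := by
      rw [Submonoid.smul_def, map_smul, ← Submonoid.smul_def, ht]
    have hx : t • x = 0 := hφinj (by rw [this, map_zero])
    rw [Submodule.mem_bot]
    show IsLocalizedModule.mk' ℓ x s = 0
    exact (IsLocalizedModule.mk'_eq_zero' ℓ s).mpr ⟨t, hx⟩
  have hgsurj : Function.Surjective Φ := by
    intro y
    obtain ⟨⟨wy, s⟩, rfl⟩ := IsLocalizedModule.mk'_surjective (Submonoid.powers g) f y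
    rw [Function.uncurry_apply_pair]
    have hmem : c • wy ∈ Submodule.span (R ⧸ P) (Set.range (ww j)) := hcs' wy
    rw [← Finsupp.range_linearCombination] at hmem
    obtain ⟨x, hx⟩ := hmem
    have hgs : (⟨g, Submonoid.mem_powers g⟩ : Submonoid.powers g) • wy = c • wy := by
      rw [Submonoid.smul_def]
      show g • wy = c • wy
      rw [← hgc, (hTor j).mk_smul]
    refine ⟨IsLocalizedModule.mk' ℓ x (⟨g, Submonoid.mem_powers g⟩ * s), ?_⟩
    rw [hΦ, IsLocalizedModule.map_mk' (Submonoid.powers g) ℓ f φ]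
    have : φ x = (⟨g, Submonoid.mem_powers g⟩ : Submonoid.powers g) • wy := by
      rw [hgs]; exact hx
    rw [this, IsLocalizedModule.mk'_cancel_left]
  exact ⟨nn j, ⟨(LinearEquiv.ofBijective Φ ⟨hginj, hgsurj⟩).symm⟩⟩

end GFR

end GenFreeAux

open GenFreeAux in
theorem generically_freeFilterable
    {R : Type u} [CommRing R] [IsNoetherianRing R] (P : Ideal R) (hP : P.IsPrime)
    (M : Type u) [AddCommGroup M] [Module R M] [Module.Finite R M]
    (hkill : ∃ k : ℕ, ∀ x : M, ∀ a ∈ P ^ k, a • x = 0) :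
    ∃ g : R, g ∉ P ∧
      FreeFilterable (Localization.Away g)
        (P.map (algebraMap R (Localization.Away g)))
        (LocalizedModule (Submonoid.powers g) M) := by
  classical
  obtain ⟨k, hk⟩ := hkill
  haveI : IsNoetherian R M := isNoetherian_of_isNoetherianRing_of_finite R M
  -- the filtration by powers of `P` over `R`
  set Q : ℕ → Submodule R M := fun j => (P ^ j) • ⊤ with hQ
  have hQtop : Q 0 = ⊤ := by simp [hQ]
  have hQbot : Q k = ⊥ := by
    rw [eq_bot_iff]
    refine Submodule.smul_le.mpr fun r hr n _ => ?_
    rw [hk n r hr]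
    exact Submodule.zero_mem ⊥
  have hQsucc : ∀ j, Q (j + 1) = P • Q j := by
    intro j
    simp only [hQ]
    rw [pow_succ', ← Ideal.smul_eq_mul, Submodule.smul_assoc]
  have hQanti : ∀ {a b : ℕ}, a ≤ b → Q b ≤ Q a := by
    intro a b hab
    exact Submodule.smul_mono (Ideal.pow_le_pow_right hab) le_rfl
  -- the subquotients
  set SQ : ℕ → Type u := fun j =>
    (↥(Q j) ⧸ Submodule.comap (Q j).subtype (Q (j + 1))) with hSQ
  haveI hfin : ∀ j, Module.Finite R (SQ j) := by
    intro j
    haveI : Module.Finite R ↥(Q j) := Module.Finite.iff_fg.mpr (IsNoetherian.noetherian _)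
    exact Module.Finite.of_surjective
      (Submodule.mkQ (Submodule.comap (Q j).subtype (Q (j + 1))))
      (Submodule.mkQ_surjective _)
  have hkill' : ∀ j, ∀ a ∈ P, ∀ x : SQ j, a • x = 0 := by
    intro j a ha x
    obtain ⟨y, rfl⟩ := Submodule.Quotient.mk_surjective _ x
    rw [← Submodule.Quotient.mk_smul, Submodule.Quotient.mk_eq_zero]
    rw [Submodule.mem_comap]
    show ((a • y : ↥(Q j)) : M) ∈ Q (j + 1)
    rw [hQsucc j]
    exact Submodule.smul_mem_smul ha y.2
  obtain ⟨g, hg, H⟩ := gfr P hP k SQ hfin hkill'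
  refine ⟨g, hg, ?_⟩
  set p : Submonoid R := Submonoid.powers g with hp
  set R' := Localization.Away g with hR'
  set M' := LocalizedModule p M with hM'
  set mkM : M →ₗ[R] M' := LocalizedModule.mkLinearMap p M with hmkM
  haveI : IsNoetherianRing R' := IsLocalization.isNoetherianRing p R' inferInstance
  haveI : Module.Finite R' M' := Module.Finite.of_isLocalizedModule p mkM
  haveI : IsNoetherian R' M' := isNoetherian_of_isNoetherianRing_of_finite R' M'
  set P' := P.map (algebraMap R R') with hP'
  -- the filtration
  set F : ℕ → Submodule R' M' := fun n => (Q (k - n)).localized' R' p mkM with hF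
  refine ⟨F, ?_, ?_, ?_, ?_, ?_⟩
  · show (Q (k - 0)).localized' R' p mkM = ⊥
    rw [Nat.sub_zero, hQbot, Submodule.localized'_bot]
  · intro n
    exact localized'_mono R' p mkM (hQanti (by omega))
  · intro n
    exact IsNoetherian.noetherian _
  · rw [eq_top_iff]
    have hFk : F k = ⊤ := by
      show (Q (k - k)).localized' R' p mkM = ⊤
      rw [Nat.sub_self, hQtop, Submodule.localized'_top]
    rw [← hFk]
    exact le_iSup F k
  · intro n
    by_cases hn : n < k
    · -- main case
      set j := k - (n + 1) with hj
      have hkn : k - n = j + 1 := by omega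
      set KQ : Submodule R ↥(Q j) := Submodule.comap (Q j).subtype (Q (j + 1)) with hKQ
      set f₀ : ↥(Q j) →ₗ[R] ↥((Q j).localized' R' p mkM) := (Q j).toLocalized' R' p mkM with hf₀
      have hstar : KQ.localized' R' p f₀ =
          Submodule.comap ((Q j).localized' R' p mkM).subtype
            ((Q (j + 1)).localized' R' p mkM) :=
        localized'_comap R' p mkM (Q j) (Q (j + 1)) (hQanti (by omega))
      have hFn1 : F (n + 1) = (Q j).localized' R' p mkM := rfl
      have hFn : F n = (Q (j + 1)).localized' R' p mkM := by
        show (Q (k - n)).localized' R' p mkM = _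
        rw [hkn]
      have hcomap : Submodule.comap (F (n + 1)).subtype (F n) = KQ.localized' R' p f₀ := by
        rw [hFn, hstar]
      letI : Module R (↥(F (n + 1)) ⧸ Submodule.comap (F (n + 1)).subtype (F n)) :=
        Submodule.Quotient.module' _
      haveI : IsScalarTower R R' (↥(F (n + 1)) ⧸ Submodule.comap (F (n + 1)).subtype (F n)) :=
        isScalarTower_quotient _
      set e₂ : (↥((Q j).localized' R' p mkM) ⧸ KQ.localized' R' p f₀) ≃ₗ[R']
          (↥(F (n + 1)) ⧸ Submodule.comap (F (n + 1)).subtype (F n)) :=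
        Submodule.quotEquivOfEq _ _ hcomap.symm with he₂
      set fq : (↥(Q j) ⧸ KQ) →ₗ[R] (↥((Q j).localized' R' p mkM) ⧸ KQ.localized' R' p f₀) :=
        Submodule.toLocalizedQuotient' R' p f₀ KQ with hfq
      haveI hfqloc : IsLocalizedModule p fq := IsLocalizedModule.toLocalizedQuotient' R' p f₀ KQ
      set comp : (↥(Q j) ⧸ KQ) →ₗ[R]
          (↥(F (n + 1)) ⧸ Submodule.comap (F (n + 1)).subtype (F n)) :=
        (e₂.restrictScalars R : _ ≃ₗ[R] _).toLinearMap ∘ₗ fq with hcomp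
      haveI hcomploc : IsLocalizedModule p comp :=
        IsLocalizedModule.of_linearEquiv p fq (e₂.restrictScalars R)
      obtain ⟨m, ⟨eR⟩⟩ := H j (by omega) _ comp hcomploc
      set eB := extEquiv p R' eR with heB
      exact ⟨ULift.{u} (Fin m),
        ⟨eB.trans (Finsupp.domLCongr (Equiv.ulift.{u}).symm)⟩⟩
    · -- trivial case: the filtration has stabilized
      have hEq : F (n + 1) = F n := by
        show (Q (k - (n+1))).localized' R' p mkM = (Q (k - n)).localized' R' p mkM
        congr 2
        omega
      have hcomap : Submodule.comap (F (n + 1)).subtype (F n) = ⊤ := by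
        conv_lhs => rw [← hEq]
        exact Submodule.comap_subtype_self _
      haveI : Subsingleton (↥(F (n + 1)) ⧸ Submodule.comap (F (n + 1)).subtype (F n)) :=
        Submodule.Quotient.subsingleton_iff.mpr hcomap
      haveI : Subsingleton (PEmpty.{u + 1} →₀ (R' ⧸ P')) := by
        constructor
        intro a b
        ext x
        exact x.elim
      exact ⟨PEmpty.{u + 1}, ⟨subsingletonEquiv R' _ _⟩⟩
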